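/- Let R be a Noetherian commutative ring, S ⊆ R a countable multiplicative subset, and F an R-module such that F/sF is a flat R/sR-module for every s ∈ S. Then the S-completion Λ(F) = lim_{s ∈ S} F/sF is a flat R-module. -/

import Mathlib

universe u
set_option maxHeartbeats 1000000
open Submodule Function
namespace S12
variable {R : Type u} [CommRing R] {F : Type u} [AddCommGroup F] [Module R F]
/-- `F/sF`. -/
abbrev Md (F : Type u) [AddCommGroup F] [Module R F] (s : R) : Type u :=
  F ⧸ (Ideal.span {s} • ⊤ : Submodule R F)
/-- transition map `F/tF → F/sF` for `s ∣ t`. -/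
def qd (F : Type u) [AddCommGroup F] [Module R F] {s t : R} (h : s ∣ t) :
    Md F t →ₗ[R] Md F s :=
  Submodule.mapQ (Ideal.span {t} • ⊤) (Ideal.span {s} • ⊤) (LinearMap.id : F →ₗ[R] F)
    (by
      rw [Submodule.comap_id]
      exact Submodule.smul_mono_left (Ideal.span_singleton_le_span_singleton.mpr h))
@[simp] lemma qd_mk {s t : R} (h : s ∣ t) (f : F) :
    qd F h (Submodule.Quotient.mk f) = Submodule.Quotient.mk f := by
  simp [qd, Submodule.mapQ_apply]
lemma qd_qd {s t u : R} (h1 : s ∣ t) (h2 : t ∣ u) (x : Md F u) :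
    qd F h1 (qd F h2 x) = qd F (h1.trans h2) x := by
  obtain ⟨f, rfl⟩ := Submodule.Quotient.mk_surjective _ x
  simp
@[simp] lemma qd_refl {s : R} (h : s ∣ s) (x : Md F s) : qd F h x = x := by
  obtain ⟨f, rfl⟩ := Submodule.Quotient.mk_surjective _ x
  simp
lemma qd_surjective {s t : R} (h : s ∣ t) : Surjective (qd F h) := by
  intro y
  obtain ⟨f, rfl⟩ := Submodule.Quotient.mk_surjective _ y
  exact ⟨Submodule.Quotient.mk f, by simp⟩
lemma smul_self_eq_zero (s : R) (x : Md F s) : s • x = 0 := by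
  obtain ⟨f, rfl⟩ := Submodule.Quotient.mk_surjective _ x
  rw [← Submodule.Quotient.mk_smul, Submodule.Quotient.mk_eq_zero]
  exact Submodule.smul_mem_smul (Ideal.mem_span_singleton_self s) trivial
lemma mk_smul_eq (s : R) (r : R) (y : Md F s) :
    (Ideal.Quotient.mk (Ideal.span {s}) r) • y = r • y := rfl
variable (S : Submonoid R)
/-- The `S`-completion submodule, syntactically as in the theorem statement. -/
def Lam (F : Type u) [AddCommGroup F] [Module R F] :
    Submodule R (∀ s : S, F ⧸ (Ideal.span {(s : R)} • ⊤ : Submodule R F)) :=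
  ⨅ (s : S) (t : S) (h : (s : R) ∣ (t : R)),
    LinearMap.ker
      ((Submodule.mapQ (Ideal.span {(t : R)} • ⊤) (Ideal.span {(s : R)} • ⊤)
        (LinearMap.id : F →ₗ[R] F)
        (by
          rw [Submodule.comap_id]
          exact Submodule.smul_mono_left
            (Ideal.span_singleton_le_span_singleton.mpr h))).comp
        (LinearMap.proj t : (∀ u : S, F ⧸ (Ideal.span {(u : R)} • ⊤ : Submodule R F)) →ₗ[R] _)
        - (LinearMap.proj s))
lemma mem_Lam_iff {x : ∀ s : S, Md F (s : R)} :
    x ∈ Lam S F ↔ ∀ (s t : S) (h : (s : R) ∣ (t : R)), qd F h (x t) = x s := by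
  simp only [Lam, Submodule.mem_iInf, LinearMap.mem_ker, LinearMap.sub_apply,
    LinearMap.comp_apply, LinearMap.proj_apply, sub_eq_zero]
  rfl
/-- evaluation of the completion at `s ∈ S`. -/
def ev (s : S) : Lam S F →ₗ[R] Md F (s : R) :=
  (LinearMap.proj s).comp (Lam S F).subtype
@[simp] lemma ev_apply (s : S) (x : Lam S F) : ev S s x = (x : ∀ u : S, Md F (u : R)) s := rfl
lemma ev_compat (s t : S) (h : (s : R) ∣ (t : R)) (x : Lam S F) :
    qd F h (ev S t x) = ev S s x :=
  (mem_Lam_iff S).mp x.2 s t h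

section Flat
variable {A : Type u} [CommRing A] {M : Type u} [AddCommGroup M] [Module A M]
variable {ι δ : Type u} [Fintype ι] [Fintype δ]

private lemma sum_ulift {N : Type u} [AddCommMonoid N] {κ : Type u} (hκ : Fintype κ)
    (f : κ → N) :
    (@Finset.univ κ hκ).sum f
      = ∑ j : ULift.{u} (Fin (@Fintype.card κ hκ)),
          f ((Equiv.ulift.trans (@Fintype.equivFin κ hκ).symm) j) := by
  letI := hκ
  exact (Fintype.sum_equiv (Equiv.ulift.trans (Fintype.equivFin κ).symm) _ f
    (fun j => rfl)).symm

lemma flat_matrix_factor [Module.Flat A M] (C : δ → ι → A) (v : ι → M)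
    (h : ∀ l, ∑ i, C l i • v i = 0) :
    ∃ (k : ℕ) (B : ι → ULift.{u} (Fin k) → A) (y : ULift.{u} (Fin k) → M),
      (∀ i, v i = ∑ j, B i j • y j) ∧ ∀ l j, ∑ i, C l i * B i j = 0 := by
  classical
  suffices hs : ∃ (κ : Type u) (_ : Fintype κ) (B : ι → κ → A) (y : κ → M),
      (∀ i, v i = ∑ j, B i j • y j) ∧ ∀ l j, ∑ i, C l i * B i j = 0 by
    obtain ⟨κ, hκ, B, y, h1, h2⟩ := hs
    refine ⟨@Fintype.card κ hκ,
      fun i j => B i ((Equiv.ulift.trans (@Fintype.equivFin κ hκ).symm) j),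
      fun j => y ((Equiv.ulift.trans (@Fintype.equivFin κ hκ).symm) j),
      fun i => ?_, fun l j => h2 l _⟩
    rw [h1 i]
    exact sum_ulift hκ (fun j => B i j • y j)
  set x : (ι → A) →ₗ[A] M := Fintype.linearCombination A v with hx_def
  set f : (δ → A) →ₗ[A] (ι → A) := Fintype.linearCombination A (fun l => C l) with hf_def
  have hfw : ∀ w : δ → A, f w = fun i => ∑ l, w l * C l i := by
    intro w
    funext i
    simp [hf_def, Fintype.linearCombination_apply, Finset.sum_apply, smul_eq_mul]
  have hxf : x ∘ₗ f = 0 := by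
    apply LinearMap.ext
    intro w
    rw [LinearMap.comp_apply, LinearMap.zero_apply, hfw w]
    calc x (fun i => ∑ l, w l * C l i)
        = ∑ i, (∑ l, w l * C l i) • v i := by
          simp [hx_def, Fintype.linearCombination_apply]
      _ = ∑ i, ∑ l, (w l * C l i) • v i := by simp [Finset.sum_smul]
      _ = ∑ l, ∑ i, (w l * C l i) • v i := Finset.sum_comm
      _ = ∑ l, w l • ∑ i, C l i • v i := by simp [Finset.smul_sum, mul_smul]
      _ = 0 := by simp [h]
  obtain ⟨k', a, y', hxa, haf⟩ := Module.Flat.exists_factorization_of_comp_eq_zero_of_free hxf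
  refine ⟨ULift.{u} (Fin k'), inferInstance, fun i j => a (Pi.single i 1) j.down,
    fun j => y' (Finsupp.single j.down 1), ?_, ?_⟩
  · -- v i = ∑ j, B i j • y j
    intro i
    have h1 : v i = x (Pi.single i 1) := by
      simp [hx_def, Fintype.linearCombination_apply, Pi.single_apply, ite_smul]
    have h2 : x (Pi.single i 1) = y' (a (Pi.single i 1)) := by rw [hxa]; rfl
    have h3 : ∀ g : Fin k' →₀ A, y' g = ∑ j, g j • y' (Finsupp.single j 1) := by
      intro g
      have hg : g = ∑ j, Finsupp.single j (g j) := by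
        ext j'
        rw [Finsupp.finset_sum_apply]
        simp [Finsupp.single_apply]
      conv_lhs => rw [hg]
      rw [map_sum]
      congr 1
      funext j
      rw [← Finsupp.smul_single_one j (g j), map_smul]
    rw [h1, h2, h3]
    exact (Fintype.sum_equiv Equiv.ulift _ _ (fun _ => rfl)).symm
  · -- kernel condition
    intro l ⟨j⟩
    have h1 : f (Pi.single l 1) = fun i => C l i := by
      rw [hfw]
      funext i
      simp [Pi.single_apply, ite_mul]
    have h2 : a (fun i => C l i) = 0 := by
      rw [← h1, ← LinearMap.comp_apply, haf, LinearMap.zero_apply]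
    have h3 : (fun i => C l i) = ∑ i, C l i • (Pi.single i (1 : A) : ι → A) := by
      funext i'
      rw [Finset.sum_apply]
      simp [Pi.single_apply, mul_ite]
    rw [h3] at h2
    rw [map_sum] at h2
    have h4 := congrArg (fun g : Fin k' →₀ A => g j) h2
    simp only [Finsupp.finset_sum_apply] at h4
    simpa [map_smul, smul_eq_mul] using h4

end Flat

variable {S : Submonoid R}

section Chain
variable (T : ℕ → S) (hT : ∀ n, (T n : R) ∣ (T (n + 1) : R))
  (hTc : ∀ (s : S) (k : ℕ), ∃ n, ((s : R)) ^ k ∣ (T n : R))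

include hT in
lemma hT_le {m n : ℕ} (h : m ≤ n) : (T m : R) ∣ (T n : R) := by
  induction n with
  | zero => simpa [Nat.le_zero.mp h] using dvd_refl (T 0 : R)
  | succ n ih =>
    rcases Nat.lt_or_ge m (n+1) with h' | h'
    · exact (ih (Nat.lt_succ_iff.mp h')).trans (hT n)
    · have : m = n + 1 := le_antisymm h h'
      subst this; exact dvd_refl _

include hTc in
lemma hT_dvd (s : S) : ∃ n, (s : R) ∣ (T n : R) := by
  obtain ⟨n, hn⟩ := hTc s 1
  exact ⟨n, by simpa using hn⟩

include hTc in
/-- a chain-compatible sequence glues to an element of the limit. -/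
lemma glue_exists (c : ∀ n, Md F (T n : R))
    (hc : ∀ n, qd F (hT n) (c (n + 1)) = c n) :
    ∃ x : Lam S F, ∀ n, ev S (T n) x = c n := by
  have hdown : ∀ {m n : ℕ} (h : m ≤ n), qd F (hT_le T hT h) (c n) = c m := by
    intro m n h
    induction n with
    | zero =>
      obtain rfl : m = 0 := Nat.le_zero.mp h
      exact qd_refl _ _
    | succ n ih =>
      rcases Nat.lt_or_ge m (n+1) with h' | h'
      · have hmn := Nat.lt_succ_iff.mp h'
        rw [← ih hmn, ← hc n, qd_qd]
      · have : m = n + 1 := le_antisymm h h'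
        subst this; exact qd_refl _ _
  have key : ∀ (s : S) {n₁ n₂ : ℕ} (h₁ : (s : R) ∣ T n₁) (h₂ : (s : R) ∣ T n₂),
      qd F h₁ (c n₁) = qd F h₂ (c n₂) := by
    intro s n₁ n₂ h₁ h₂
    rcases le_total n₁ n₂ with h | h
    · rw [← hdown h, qd_qd]
    · rw [← hdown (h := h) (m := n₂), qd_qd]
  refine ⟨⟨fun s => qd F (hT_dvd T hTc s).choose_spec (c (hT_dvd T hTc s).choose), ?_⟩, ?_⟩
  · rw [mem_Lam_iff]
    intro s t h
    rw [qd_qd]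
    exact key s _ _
  · intro n
    show (qd F (hT_dvd T hTc (T n)).choose_spec) (c (hT_dvd T hTc (T n)).choose) = c n
    rw [key (T n) (n₁ := (hT_dvd T hTc (T n)).choose) (n₂ := n)
      (hT_dvd T hTc (T n)).choose_spec (dvd_refl (T n : R))]
    exact qd_refl _ _

include hT hTc in
/-- `ev` at chain points is surjective. -/
lemma ev_surjective (n : ℕ) : Surjective (ev S (T n) : Lam S F →ₗ[R] Md F (T n : R)) := by
  intro w
  have step : ∀ m (d : Md F (T (n + m) : R)), ∃ d' : Md F (T (n + m + 1) : R),
      qd F (hT (n + m)) d' = d := fun m d => qd_surjective (hT (n + m)) d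
  choose stepf hstep using step
  let d : ∀ m, Md F (T (n + m) : R) := fun m => Nat.rec w (fun m dm => stepf m dm) m
  have hd : ∀ m, qd F (hT (n + m)) (d (m + 1)) = d m := fun m => hstep m (d m)
  have hdw : ∀ m, qd F (hT_le T hT (Nat.le_add_right n m)) (d m) = w := by
    intro m
    induction m with
    | zero => exact qd_refl _ _
    | succ m ih =>
      have h2 : qd F ((hT_le T hT (Nat.le_add_right n m)).trans (hT (n + m)))
          (d (m + 1)) = w := by
        rw [← qd_qd (hT_le T hT (Nat.le_add_right n m)) (hT (n + m)), hd, ih]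
      exact h2
  set c : ∀ m, Md F (T m : R) := fun m => qd F (hT_le T hT (Nat.le_add_left m n)) (d m) with hc_def
  have hcc : ∀ m, qd F (hT m) (c (m + 1)) = c m := by
    intro m
    show qd F (hT m) (qd F _ (d (m + 1))) = qd F _ (d m)
    rw [qd_qd, ← hd m, qd_qd]
  obtain ⟨x, hx⟩ := glue_exists T hT hTc c hcc
  refine ⟨x, ?_⟩
  rw [hx n]
  show qd F _ (d n) = w
  exact hdw n


/-- kernel of evaluation at chain level `n`. -/
def Ln (n : ℕ) : Submodule R ↥(Lam S F) := LinearMap.ker (ev S (T n))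

lemma mem_Ln {n : ℕ} {x : Lam S F} : x ∈ Ln (F := F) T n ↔ ev S (T n) x = 0 := Iff.rfl

include hT in
lemma Ln_mono {m n : ℕ} (h : m ≤ n) : Ln (F := F) T n ≤ Ln (F := F) T m := by
  intro x hx
  rw [mem_Ln] at hx ⊢
  rw [← ev_compat S (T m) (T n) (hT_le T hT h) x, hx, map_zero]

lemma smul_T_mem_Ln (n : ℕ) (x : Lam S F) : (T n : R) • x ∈ Ln (F := F) T n := by
  rw [mem_Ln, map_smul]
  exact smul_self_eq_zero _ _

include hTc in
lemma eq_zero_of_forall_mem_Ln (x : Lam S F) (h : ∀ n, x ∈ Ln (F := F) T n) : x = 0 := by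
  ext s
  obtain ⟨n, hn⟩ := hT_dvd T hTc s
  have h1 : ev S s x = 0 := by
    rw [← ev_compat S s (T n) hn x, (mem_Ln T).mp (h n), map_zero]
  simpa using h1

include hT hTc in
lemma complete (x : ℕ → Lam S F) (hx : ∀ N, x (N + 1) - x N ∈ Ln (F := F) T N) :
    ∃ X : Lam S F, ∀ N, X - x N ∈ Ln (F := F) T N := by
  have hcc : ∀ n, qd F (hT n) (ev S (T (n + 1)) (x (n + 1))) = ev S (T n) (x n) := by
    intro n
    rw [ev_compat S (T n) (T (n + 1)) (hT n) (x (n + 1))]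
    have h1 : ev S (T n) (x (n + 1) - x n) = 0 := (mem_Ln T).mp (hx n)
    rw [map_sub, sub_eq_zero] at h1
    exact h1
  obtain ⟨X, hX⟩ := glue_exists T hT hTc (fun n => ev S (T n) (x n)) hcc
  refine ⟨X, fun N => ?_⟩
  rw [mem_Ln, map_sub, hX N, sub_self]

section Matrix
variable {ι δ : Type u} [Fintype ι] [Fintype δ]

/-- the linear map `R^ι → R^δ` given by a rectangular array. -/
def matMapR (C : δ → ι → R) : (ι → R) →ₗ[R] (δ → R) :=
  LinearMap.pi fun l => Fintype.linearCombination R (fun i => C l i)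

lemma matMapR_apply (C : δ → ι → R) (τ : ι → R) (l : δ) :
    matMapR C τ l = ∑ i, τ i * C l i := by
  simp [matMapR, Fintype.linearCombination_apply, smul_eq_mul]

include hT hTc in
/-- Artin–Rees splitting: solutions mod a deep level split into an exact solution
plus a `T n`-multiple. -/
lemma ar_split [IsNoetherianRing R] (C : δ → ι → R) (n : ℕ) :
    ∃ m, n ≤ m ∧ ∀ τ : ι → R, (∀ l, (T m : R) ∣ matMapR C τ l) →
      ∃ κ₀ ξ : ι → R, τ = κ₀ + (T n : R) • ξ ∧ matMapR C κ₀ = 0 := by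
  obtain ⟨c, hc⟩ := Ideal.exists_pow_inf_eq_pow_smul (Ideal.span {(T n : R)})
    (LinearMap.range (matMapR (R := R) C))
  obtain ⟨m₀, hm₀⟩ := hTc (T n) (c + 1)
  refine ⟨max m₀ n, le_max_right _ _, ?_⟩
  intro τ hτ
  have hdvd : ((T n : R)) ^ (c + 1) ∣ (T (max m₀ n) : R) :=
    hm₀.trans (hT_le T hT (le_max_left _ _))
  have h1 : matMapR C τ ∈ (Ideal.span {(T n : R)}) ^ (c + 1) • (⊤ : Submodule R (δ → R)) ⊓
      LinearMap.range (matMapR (R := R) C) := by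
    constructor
    · choose w hw using hτ
      obtain ⟨z, hz⟩ := hdvd
      have he : matMapR C τ = ((T n : R)) ^ (c + 1) • (fun l => z * w l) := by
        funext l
        rw [hw l, hz]
        simp [mul_assoc]
      rw [he]
      refine Submodule.smul_mem_smul ?_ trivial
      rw [Ideal.span_singleton_pow]
      exact Ideal.mem_span_singleton_self _
    · exact ⟨τ, rfl⟩
  rw [hc (c + 1) (Nat.le_succ c)] at h1
  have h2 : matMapR C τ ∈ (Ideal.span {(T n : R)}) • (LinearMap.range (matMapR (R := R) C)) := by
    have he : c + 1 - c = 1 := by omega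
    rw [he, pow_one] at h1
    exact Submodule.smul_mono le_rfl inf_le_right h1
  rw [Submodule.ideal_span_singleton_smul] at h2
  have h3 : ∃ ν ∈ LinearMap.range (matMapR (R := R) C), (T n : R) • ν = matMapR C τ := h2
  obtain ⟨ν, hν, hνe⟩ := h3
  obtain ⟨ξ, rfl⟩ := hν
  refine ⟨τ - (T n : R) • ξ, ξ, by abel, ?_⟩
  rw [map_sub, map_smul, hνe, sub_self]

include hT hTc in
/-- Master lemma: a family `v` satisfying the linear relations `C` at a sufficiently
deep level `m` of the completion can be corrected, modulo level `n`, to an exact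
solution built from exact syzygies of `C`. -/
lemma master [IsNoetherianRing R]
    (hfl : ∀ s : S, Module.Flat (R ⧸ Ideal.span {(s : R)}) (Md F (s : R)))
    (C : δ → ι → R) (n : ℕ) :
    ∃ m, n ≤ m ∧ ∀ v : ι → ↥(Lam S F), (∀ l, (∑ i, C l i • v i) ∈ Ln (F := F) T m) →
      ∃ (k : ℕ) (τ : ULift.{u} (Fin k) → ι → R) (u : ULift.{u} (Fin k) → ↥(Lam S F)),
        (∀ j, matMapR C (τ j) = 0) ∧
        (∀ i, (v i - ∑ j, τ j i • u j) ∈ Ln (F := F) T n) := by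
  classical
  obtain ⟨m, hnm, har⟩ := ar_split T hT hTc C n
  refine ⟨m, hnm, ?_⟩
  intro v hv
  haveI := hfl (T m)
  set vb : ι → Md F (T m : R) := fun i => ev S (T m) (v i) with hvb_def
  have hrel : ∀ l, ∑ i,
      (Ideal.Quotient.mk (Ideal.span {(T m : R)}) (C l i)) • vb i = 0 := by
    intro l
    have h0 : ev S (T m) (∑ i, C l i • v i) = 0 := (mem_Ln T).mp (hv l)
    calc ∑ i, (Ideal.Quotient.mk (Ideal.span {(T m : R)}) (C l i)) • vb i
        = ∑ i, C l i • vb i := by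
          simp only [mk_smul_eq]
      _ = ev S (T m) (∑ i, C l i • v i) := by
          rw [map_sum]
          simp only [map_smul]
          rfl
      _ = 0 := h0
  obtain ⟨k, Bb, yb, hB1, hB2⟩ :=
    flat_matrix_factor (fun l i => Ideal.Quotient.mk (Ideal.span {(T m : R)}) (C l i)) vb hrel
  choose B hB using fun i (j : ULift.{u} (Fin k)) => Ideal.Quotient.mk_surjective (Bb i j)
  have hdvd : ∀ j l, (T m : R) ∣ matMapR C (fun i => B i j) l := by
    intro j l
    rw [matMapR_apply]
    rw [← Ideal.mem_span_singleton, ← Ideal.Quotient.eq_zero_iff_mem]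
    have : (Ideal.Quotient.mk (Ideal.span {(T m : R)})) (∑ i, B i j * C l i)
        = ∑ i, (Ideal.Quotient.mk (Ideal.span {(T m : R)}) (C l i)) * Bb i j := by
      rw [map_sum]
      congr 1
      funext i
      rw [map_mul, hB i j, mul_comm]
    rw [this, hB2 l j]
  choose kap xi hsplit hker using fun j => har (fun i => B i j) (hdvd j)
  choose Y hY using fun j => ev_surjective T hT hTc m (yb j)
  refine ⟨k, kap, Y, hker, ?_⟩
  intro i
  have hBi : ∀ j, kap j i = B i j - (T n : R) * xi j i := by
    intro j
    have h5 := congrFun (hsplit j) i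
    simp only [Pi.add_apply, Pi.smul_apply, smul_eq_mul] at h5
    rw [h5]
    ring
  have key : v i - ∑ j, kap j i • Y j
      = (v i - ∑ j, B i j • Y j) + (T n : R) • (∑ j, xi j i • Y j) := by
    have h6 : ∀ j, kap j i • Y j = B i j • Y j - (T n : R) • (xi j i • Y j) := by
      intro j
      calc kap j i • Y j = (B i j - (T n : R) * xi j i) • Y j := by rw [hBi j]
        _ = B i j • Y j - ((T n : R) * xi j i) • Y j := sub_smul (B i j) ((T n : R) * xi j i) (Y j)
        _ = B i j • Y j - (T n : R) • (xi j i • Y j) := by rw [mul_smul]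
    rw [Finset.sum_congr rfl (fun j _ => h6 j), Finset.sum_sub_distrib, Finset.smul_sum]
    abel
  rw [key]
  refine Submodule.add_mem _ ?_ (smul_T_mem_Ln T n _)
  refine Ln_mono T hT hnm ?_
  rw [mem_Ln, map_sub, map_sum]
  have h7 : ∀ j, ev S (T m) (B i j • Y j) = Bb i j • yb j := by
    intro j
    rw [map_smul, hY j, ← hB i j]
    exact (mk_smul_eq _ _ _).symm
  rw [Finset.sum_congr rfl (fun j _ => h7 j), ← hB1 i]
  exact sub_self _

end Matrix

include hT hTc in
/-- Every finite relation in the completion is trivial. -/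
lemma closure [IsNoetherianRing R]
    (hfl : ∀ s : S, Module.Flat (R ⧸ Ideal.span {(s : R)}) (Md F (s : R)))
    {ι : Type u} [Fintype ι] (f : ι → R) (x : ι → ↥(Lam S F))
    (hx : ∑ i, f i • x i = 0) :
    ∃ (k : ℕ) (a : ι → ULift.{u} (Fin k) → R) (y : ULift.{u} (Fin k) → ↥(Lam S F)),
      (∀ i, x i = ∑ j, a i j • y j) ∧ ∀ j, ∑ i, f i * a i j = 0 := by
  classical
  set C₁ : PUnit.{u + 1} → ι → R := fun _ => f with hC₁
  -- a finite generating family for the syzygies of `f`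
  obtain ⟨p, σ₀, hσ₀⟩ := Submodule.fg_iff_exists_fin_generating_family.mp
    (IsNoetherian.noetherian (LinearMap.ker (matMapR (R := R) C₁)))
  set σ : ULift.{u} (Fin p) → ι → R := fun j => σ₀ j.down with hσ_def
  have hσspan : Submodule.span R (Set.range σ) = LinearMap.ker (matMapR (R := R) C₁) := by
    rw [← hσ₀]
    congr 1
    ext τ
    constructor
    · rintro ⟨j, rfl⟩; exact ⟨j.down, rfl⟩
    · rintro ⟨j, rfl⟩; exact ⟨ULift.up j, rfl⟩
  have hσker : ∀ j, ∑ i, σ j i * f i = 0 := by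
    intro j
    have h1 : σ j ∈ LinearMap.ker (matMapR (R := R) C₁) := by
      rw [← hσspan]
      exact Submodule.subset_span ⟨j, rfl⟩
    have h2 := congrFun (LinearMap.mem_ker.mp h1) PUnit.unit
    rwa [matMapR_apply] at h2
  -- approximate solutions at every level
  have approx : ∀ n, ∃ z : ULift.{u} (Fin p) → ↥(Lam S F),
      ∀ i, (x i - ∑ j, σ j i • z j) ∈ Ln (F := F) T n := by
    intro n
    obtain ⟨m, hnm, hmas⟩ := master T hT hTc hfl C₁ n
    obtain ⟨k₁, τ, u, hτker, hτcorr⟩ := hmas x (by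
      intro l
      rw [show (∑ i, C₁ l i • x i) = 0 from hx]
      exact Submodule.zero_mem _)
    have hτspan : ∀ j, ∃ g : ULift.{u} (Fin p) → R, ∑ j', g j' • σ j' = τ j := by
      intro j
      have h1 : τ j ∈ LinearMap.ker (matMapR (R := R) C₁) := LinearMap.mem_ker.mpr (hτker j)
      rw [← hσspan] at h1
      exact (mem_span_range_iff_exists_fun R).mp h1
    choose g hg using hτspan
    refine ⟨fun j' => ∑ j, g j j' • u j, ?_⟩
    intro i
    have h2 : ∑ j', σ j' i • (∑ j, g j j' • u j) = ∑ j, τ j i • u j := by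
      calc ∑ j', σ j' i • (∑ j, g j j' • u j)
          = ∑ j', ∑ j, (g j j' * σ j' i) • u j := by
            simp [Finset.smul_sum, smul_smul, mul_comm]
        _ = ∑ j, ∑ j', (g j j' * σ j' i) • u j := Finset.sum_comm
        _ = ∑ j, τ j i • u j := by
            refine Finset.sum_congr rfl (fun j _ => ?_)
            rw [← Finset.sum_smul]
            congr 1
            have h3 := congrFun (hg j) i
            rw [Finset.sum_apply] at h3
            simpa [smul_eq_mul] using h3
    rw [h2]
    exact hτcorr i
  -- the recursion
  choose μ hμ1 hμ2 using fun N => master T hT hTc hfl (fun i (j : ULift.{u} (Fin p)) => σ j i) N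
  have step : ∀ N (xN : ULift.{u} (Fin p) → ↥(Lam S F)),
      (∀ i, (x i - ∑ j, σ j i • xN j) ∈ Ln (F := F) T (μ N)) →
      ∃ xN' : ULift.{u} (Fin p) → ↥(Lam S F),
        (∀ i, (x i - ∑ j, σ j i • xN' j) ∈ Ln (F := F) T (μ (N + 1))) ∧
        ∀ j, xN' j - xN j ∈ Ln (F := F) T N := by
    intro N xN hInv
    obtain ⟨z, hz⟩ := approx (max (μ N) (μ (N + 1)))
    have hdiff : ∀ i, (∑ j, σ j i • (z j - xN j)) ∈ Ln (F := F) T (μ N) := by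
      intro i
      have h4 : ∑ j, σ j i • (z j - xN j)
          = (x i - ∑ j, σ j i • xN j) - (x i - ∑ j, σ j i • z j) := by
        simp only [smul_sub, Finset.sum_sub_distrib]
        abel
      rw [h4]
      exact Submodule.sub_mem _ (hInv i)
        (Ln_mono T hT (le_max_left _ _) (hz i))
    obtain ⟨k₂, τ₂, u₂, hker₂, hcorr₂⟩ := hμ2 N (fun j => z j - xN j) hdiff
    refine ⟨fun j => z j - ∑ j₂, τ₂ j₂ j • u₂ j₂, ?_, ?_⟩
    · intro i
      have h5 : ∑ j, σ j i • (z j - ∑ j₂, τ₂ j₂ j • u₂ j₂)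
          = ∑ j, σ j i • z j - ∑ j₂, (∑ j, τ₂ j₂ j * σ j i) • u₂ j₂ := by
        simp only [smul_sub, Finset.sum_sub_distrib, Finset.smul_sum]
        congr 1
        rw [Finset.sum_comm]
        refine Finset.sum_congr rfl (fun j₂ _ => ?_)
        rw [Finset.sum_smul]
        refine Finset.sum_congr rfl (fun j _ => ?_)
        rw [smul_smul, mul_comm]
      have h6 : ∀ j₂, (∑ j, τ₂ j₂ j * σ j i) = 0 := by
        intro j₂
        have := congrFun (hker₂ j₂) i
        rwa [matMapR_apply] at this
      rw [h5]
      simp only [h6, zero_smul, Finset.sum_const_zero, sub_zero]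
      exact Ln_mono T hT (le_max_right _ _) (hz i)
    · intro j
      rw [sub_right_comm]
      exact hcorr₂ j
  -- initial element
  obtain ⟨z₀, hz₀⟩ := approx (μ 0)
  -- construct the sequence
  let seq : ∀ N, {w : ULift.{u} (Fin p) → ↥(Lam S F) //
      ∀ i, (x i - ∑ j, σ j i • w j) ∈ Ln (F := F) T (μ N)} := fun N =>
    Nat.rec ⟨z₀, hz₀⟩ (fun N prev =>
      ⟨(step N prev.1 prev.2).choose, (step N prev.1 prev.2).choose_spec.1⟩) N
  have hseq_cauchy : ∀ N j, (seq (N + 1)).1 j - (seq N).1 j ∈ Ln (F := F) T N := by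
    intro N j
    exact (step N (seq N).1 (seq N).2).choose_spec.2 j
  -- pass to the limit coordinatewise
  have hlim : ∀ j, ∃ X : ↥(Lam S F), ∀ N, X - (seq N).1 j ∈ Ln (F := F) T N := by
    intro j
    exact complete T hT hTc (fun N => (seq N).1 j) (fun N => hseq_cauchy N j)
  choose X hX using hlim
  refine ⟨p, fun i j => σ j i, X, ?_, ?_⟩
  · intro i
    have hmem : ∀ N, (x i - ∑ j, σ j i • X j) ∈ Ln (F := F) T N := by
      intro N
      have h7 : x i - ∑ j, σ j i • X j
          = (x i - ∑ j, σ j i • (seq N).1 j) - ∑ j, σ j i • (X j - (seq N).1 j) := by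
        simp only [smul_sub, Finset.sum_sub_distrib]
        abel
      rw [h7]
      refine Submodule.sub_mem _ (Ln_mono T hT (hμ1 N) ((seq N).2 i)) ?_
      exact Submodule.sum_mem _ (fun j _ => Submodule.smul_mem _ _ (hX j N))
    have h8 := eq_zero_of_forall_mem_Ln T hTc _ hmem
    rw [sub_eq_zero] at h8
    exact h8
  · intro j
    rw [show (∑ i, f i * σ j i) = ∑ i, σ j i * f i from
      Finset.sum_congr rfl (fun i _ => mul_comm _ _)]
    exact hσker j

end Chain


end S12

open S12 in
/-- Let `R` be Noetherian, `S ⊆ R` a countable multiplicative subset, and `F` an `R`-module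
such that `F/sF` is a flat `R/sR`-module for every `s ∈ S`. Then the `S`-completion
`Λ(F) = lim_{s ∈ S} F/sF` (the projective limit over the divisibility preorder on `S`,
realized as the submodule of compatible families in `∏_{s ∈ S} F/sF`) is a flat
`R`-module. -/
theorem stmt12 (R : Type u) [CommRing R] [IsNoetherianRing R] (S : Submonoid R)
    (hS : Countable S) (F : Type u) [AddCommGroup F] [Module R F]
    (hflat : ∀ s : S,
      Module.Flat (R ⧸ Ideal.span {(s : R)}) (F ⧸ (Ideal.span {(s : R)} • ⊤ : Submodule R F))) :
    let pr : ∀ s : S, (∀ u : S, F ⧸ (Ideal.span {(u : R)} • ⊤ : Submodule R F)) →ₗ[R]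
        (F ⧸ (Ideal.span {(s : R)} • ⊤ : Submodule R F)) := fun s => LinearMap.proj s
    let q : ∀ (s t : S), (s : R) ∣ (t : R) →
        ((F ⧸ (Ideal.span {(t : R)} • ⊤ : Submodule R F)) →ₗ[R]
          (F ⧸ (Ideal.span {(s : R)} • ⊤ : Submodule R F))) := fun s t h =>
      Submodule.mapQ (Ideal.span {(t : R)} • ⊤) (Ideal.span {(s : R)} • ⊤)
        (LinearMap.id : F →ₗ[R] F)
        (by
          rw [Submodule.comap_id]
          exact Submodule.smul_mono_left (Ideal.span_singleton_le_span_singleton.mpr h))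
    let Λ : Submodule R (∀ s : S, F ⧸ (Ideal.span {(s : R)} • ⊤ : Submodule R F)) :=
      ⨅ (s : S) (t : S) (h : (s : R) ∣ (t : R)),
        LinearMap.ker ((q s t h).comp (pr t) - pr s)
    Module.Flat R Λ := by
  intro pr q Λ
  -- the chain
  obtain ⟨g, hg⟩ := exists_surjective_nat S
  set e : ℕ → S := fun n => g (Nat.unpair n).1 with he_def
  set T : ℕ → S := fun n => Nat.rec 1 (fun k acc => acc * e k) n with hT_def
  have hTsucc : ∀ n, T (n + 1) = T n * e n := fun n => rfl
  have hT : ∀ n, (T n : R) ∣ (T (n + 1) : R) := by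
    intro n
    rw [hTsucc n, Submonoid.coe_mul]
    exact dvd_mul_right _ _
  have hTc : ∀ (s : S) (k : ℕ), ∃ n, ((s : R)) ^ k ∣ (T n : R) := by
    intro s k
    induction k with
    | zero => exact ⟨0, by simp⟩
    | succ k ih =>
      obtain ⟨n, hn⟩ := ih
      obtain ⟨m₀, hm₀⟩ := hg s
      refine ⟨Nat.pair m₀ n + 1, ?_⟩
      have h1 : e (Nat.pair m₀ n) = s := by
        rw [he_def]
        simp only [Nat.unpair_pair]
        exact hm₀
      rw [hTsucc, Submonoid.coe_mul, h1, pow_succ]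
      exact mul_dvd_mul ((hn.trans (hT_le T hT (Nat.right_le_pair m₀ n)))) dvd_rfl
  refine Module.Flat.of_forall_isTrivialRelation ?_
  intro l f x hx
  have hx' : ∑ i, (f ∘ (Equiv.ulift : ULift.{u} (Fin l) ≃ Fin l)) i •
      (x ∘ (Equiv.ulift : ULift.{u} (Fin l) ≃ Fin l)) i = 0 := by
    rw [← hx]; exact Fintype.sum_equiv Equiv.ulift _ _ (fun _ => rfl)
  obtain ⟨k, a, y, h1, h2⟩ := closure T hT hTc hflat _ _ hx'
  exact (Equiv.ulift : ULift.{u} (Fin l) ≃ Fin l).isTrivialRelation_comp.mp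
    ⟨k, fun i j => a i (ULift.up j), fun j => y (ULift.up j),
      fun i => (h1 i).trans (Fintype.sum_equiv Equiv.ulift _ _ (fun _ => rfl)), fun j => h2 _⟩
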